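/- Let U ⊆ ℂ^n be a connected open set and let φ₁,…,φ_s be holomorphic functions on U. Suppose that φ₁,…,φ_l (for some l ≤ s) are algebraically independent over the field of rational functions (no nonzero polynomial P ∈ ℂ[z₁,…,z_n, X₁,…,X_l] satisfies P(z, φ₁(z),…,φ_l(z)) ≡ 0 on U), and that for every j = 1,…,s there exists a nonzero polynomial Q_j ∈ ℂ[z₁,…,z_n, X₁,…,X_l, Y] with Q_j(z, φ₁(z),…,φ_l(z), φ_j(z)) = 0 for all z ∈ U. Then there exist a nonempty connected open subset U' ⊆ U, an open neighborhood Û of the graph {(z, φ₁(z),…,φ_l(z)) : z ∈ U'} in ℂ^n × ℂ^l, and holomorphic Nash algebraic functions φ̂₁,…,φ̂_s on Û such that φ_j(z) = φ̂_j(z, φ₁(z),…,φ_l(z)) for all z ∈ U' and all j = 1,…,s. -/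

import Mathlib

open Filter Topology Complex

/-- A holomorphic function `H` on `Û ⊆ ℂ^n × ℂ^l` is Nash algebraic if it satisfies a
nontrivial polynomial equation `P(z, X, H(z,X)) = 0` on `Û`. -/
def NashAlgebraicOn2 {n l : ℕ} (H : (Fin n → ℂ) × (Fin l → ℂ) → ℂ)
    (Uhat : Set ((Fin n → ℂ) × (Fin l → ℂ))) : Prop :=
  DifferentiableOn ℂ H Uhat ∧
    ∃ P : Polynomial (MvPolynomial (Fin n ⊕ Fin l) ℂ), P ≠ 0 ∧
      ∀ zX ∈ Uhat,
        Polynomial.eval₂ (MvPolynomial.eval (Sum.elim zX.1 zX.2)) (H zX) P = 0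

section Aux
open Polynomial ContDiff

variable {n l : ℕ}

variable {n l : ℕ}

/-- Evaluation of a `Polynomial (MvPolynomial ...)` as a function on `ℂ^{n+l} × ℂ`. -/
noncomputable def FF (Q : Polynomial (MvPolynomial (Fin n ⊕ Fin l) ℂ))
    (x : ((Fin n → ℂ) × (Fin l → ℂ)) × ℂ) : ℂ :=
  Polynomial.eval₂ (MvPolynomial.eval (Sum.elim x.1.1 x.1.2)) x.2 Q

lemma FF_analyticAt (Q : Polynomial (MvPolynomial (Fin n ⊕ Fin l) ℂ))
    (x : ((Fin n → ℂ) × (Fin l → ℂ)) × ℂ) : AnalyticAt ℂ (FF Q) x := by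
  have hcoord : ∀ i : Fin n ⊕ Fin l,
      AnalyticAt ℂ (fun x : ((Fin n → ℂ) × (Fin l → ℂ)) × ℂ => Sum.elim x.1.1 x.1.2 i) x := by
    intro i
    cases i with
    | inl a =>
        exact ((ContinuousLinearMap.proj (R := ℂ) (φ := fun _ : Fin n => ℂ) a).comp
          ((ContinuousLinearMap.fst ℂ (Fin n → ℂ) (Fin l → ℂ)).comp
            (ContinuousLinearMap.fst ℂ ((Fin n → ℂ) × (Fin l → ℂ)) ℂ))).analyticAt x
    | inr a =>
        exact ((ContinuousLinearMap.proj (R := ℂ) (φ := fun _ : Fin l => ℂ) a).comp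
          ((ContinuousLinearMap.snd ℂ (Fin n → ℂ) (Fin l → ℂ)).comp
            (ContinuousLinearMap.fst ℂ ((Fin n → ℂ) × (Fin l → ℂ)) ℂ))).analyticAt x
  have hQ : FF Q = fun x : ((Fin n → ℂ) × (Fin l → ℂ)) × ℂ =>
      ∑ i ∈ Finset.range (Q.natDegree + 1),
        MvPolynomial.eval (Sum.elim x.1.1 x.1.2) (Q.coeff i) * x.2 ^ i := by
    funext x
    exact Polynomial.eval₂_eq_sum_range _ _
  rw [hQ]
  apply Finset.analyticAt_fun_sum
  intro i _
  have hc : AnalyticAt ℂ (fun x : ((Fin n → ℂ) × (Fin l → ℂ)) × ℂ =>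
      MvPolynomial.eval (Sum.elim x.1.1 x.1.2) (Q.coeff i)) x := by
    have := AnalyticAt.aeval_mvPolynomial (𝕜 := ℂ) (A := ℂ)
      (f := fun x : ((Fin n → ℂ) × (Fin l → ℂ)) × ℂ => Sum.elim x.1.1 x.1.2)
      (z := x) hcoord (Q.coeff i)
    have heval : ∀ (v : Fin n ⊕ Fin l → ℂ) (p : MvPolynomial (Fin n ⊕ Fin l) ℂ),
        MvPolynomial.aeval v p = MvPolynomial.eval v p := fun v p => by
      rw [← MvPolynomial.coe_aeval_eq_eval]; rfl
    simpa [heval] using this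
  exact hc.mul ((analyticAt_snd).pow i)

lemma FF_section_hasDerivAt (Q : Polynomial (MvPolynomial (Fin n ⊕ Fin l) ℂ))
    (w : (Fin n → ℂ) × (Fin l → ℂ)) (y₀ : ℂ) :
    HasDerivAt (fun y => FF Q (w, y)) (FF (Polynomial.derivative Q) (w, y₀)) y₀ := by
  have h1 : ∀ (R : Polynomial (MvPolynomial (Fin n ⊕ Fin l) ℂ)) (y : ℂ),
      FF R (w, y) = Polynomial.eval y (R.map (MvPolynomial.eval (Sum.elim w.1 w.2))) := by
    intro R y
    rw [Polynomial.eval_map]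
    rfl
  have := Polynomial.hasDerivAt (Q.map (MvPolynomial.eval (Sum.elim w.1 w.2))) y₀
  rw [Polynomial.derivative_map] at this
  simp only [← h1] at this
  exact this

lemma implicit_key (Q : Polynomial (MvPolynomial (Fin n ⊕ Fin l) ℂ))
    (w₀ : (Fin n → ℂ) × (Fin l → ℂ)) (y₀ : ℂ)
    (h0 : FF Q (w₀, y₀) = 0) (hc : FF (Polynomial.derivative Q) (w₀, y₀) ≠ 0) :
    ∃ (Ω : Set ((Fin n → ℂ) × (Fin l → ℂ)))
      (H : (Fin n → ℂ) × (Fin l → ℂ) → ℂ) (S : Set (((Fin n → ℂ) × (Fin l → ℂ)) × ℂ)),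
      IsOpen Ω ∧ w₀ ∈ Ω ∧ DifferentiableOn ℂ H Ω ∧
      (∀ w ∈ Ω, FF Q (w, H w) = 0) ∧
      IsOpen S ∧ (w₀, y₀) ∈ S ∧
      (∀ w y, w ∈ Ω → (w, y) ∈ S → FF Q (w, y) = 0 → y = H w) := by
  classical
  have hc0 : FF (Polynomial.derivative Q) (w₀, y₀) ≠ 0 := hc
  set c : ℂ := FF (Polynomial.derivative Q) (w₀, y₀) with hc_def
  set L : (((Fin n → ℂ) × (Fin l → ℂ)) × ℂ) →L[ℂ] ℂ := fderiv ℂ (FF Q) (w₀, y₀) with hL_def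
  have hFd : HasFDerivAt (FF Q) L (w₀, y₀) :=
    ((FF_analyticAt Q _).differentiableAt).hasFDerivAt
  have hL01 : L (((0 : (Fin n → ℂ) × (Fin l → ℂ))), (1 : ℂ)) = c := by
    have hinner : HasDerivAt (fun y : ℂ => (w₀, y)) ((((0 : (Fin n → ℂ) × (Fin l → ℂ))), (1 : ℂ))) y₀ :=
      (hasDerivAt_const y₀ w₀).prodMk (hasDerivAt_id y₀)
    have hcomp : HasDerivAt (fun y => FF Q (w₀, y)) (L (((0 : (Fin n → ℂ) × (Fin l → ℂ))), (1 : ℂ))) y₀ :=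
      hFd.comp_hasDerivAt y₀ hinner
    exact hcomp.unique (FF_section_hasDerivAt Q w₀ y₀)
  have hLab : ∀ (a : (Fin n → ℂ) × (Fin l → ℂ)) (b : ℂ), L (a, b) = L (a, 0) + b * c := by
    intro a b
    have h : ((a, b) : ((Fin n → ℂ) × (Fin l → ℂ)) × ℂ) = (a, 0) + b • (((0 : (Fin n → ℂ) × (Fin l → ℂ))), (1 : ℂ)) := by
      simp [Prod.ext_iff]
    rw [h, map_add, map_smul, hL01, smul_eq_mul]
  -- the linear equivalence
  set f₁ : (((Fin n → ℂ) × (Fin l → ℂ)) × ℂ) →L[ℂ] (((Fin n → ℂ) × (Fin l → ℂ)) × ℂ) := (ContinuousLinearMap.fst ℂ ((Fin n → ℂ) × (Fin l → ℂ)) ℂ).prod L with hf₁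
  set A : (((Fin n → ℂ) × (Fin l → ℂ)) × ℂ) →L[ℂ] ℂ :=
    c⁻¹ • ((ContinuousLinearMap.snd ℂ ((Fin n → ℂ) × (Fin l → ℂ)) ℂ) -
      L.comp ((ContinuousLinearMap.fst ℂ ((Fin n → ℂ) × (Fin l → ℂ)) ℂ).prod 0)) with hA
  set f₂ : (((Fin n → ℂ) × (Fin l → ℂ)) × ℂ) →L[ℂ] (((Fin n → ℂ) × (Fin l → ℂ)) × ℂ) := (ContinuousLinearMap.fst ℂ ((Fin n → ℂ) × (Fin l → ℂ)) ℂ).prod A with hf₂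
  have h₁ : Function.LeftInverse f₂ f₁ := by
    rintro ⟨a, b⟩
    have : A (a, L (a, b)) = b := by
      simp only [hA, ContinuousLinearMap.smul_apply, ContinuousLinearMap.sub_apply,
        ContinuousLinearMap.coe_comp', Function.comp_apply,
        ContinuousLinearMap.prod_apply, ContinuousLinearMap.coe_fst',
        ContinuousLinearMap.coe_snd', ContinuousLinearMap.zero_apply]
      rw [hLab a b]
      rw [smul_eq_mul, add_sub_cancel_left]
      field_simp
    simp [hf₁, hf₂, ContinuousLinearMap.prod_apply, this]
  have h₂ : Function.RightInverse f₂ f₁ := by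
    rintro ⟨a, d⟩
    have hAad : A (a, d) = c⁻¹ * (d - L (a, 0)) := by
      simp [hA, ContinuousLinearMap.smul_apply]
    have : L (a, A (a, d)) = d := by
      rw [hAad, hLab a _]
      field_simp
      ring
    simp [hf₁, hf₂, ContinuousLinearMap.prod_apply, this]
  set M : (((Fin n → ℂ) × (Fin l → ℂ)) × ℂ) ≃L[ℂ] (((Fin n → ℂ) × (Fin l → ℂ)) × ℂ) := ContinuousLinearEquiv.equivOfInverse f₁ f₂ h₁ h₂ with hM
  set G : ((Fin n → ℂ) × (Fin l → ℂ)) × ℂ → ((Fin n → ℂ) × (Fin l → ℂ)) × ℂ := fun x => (x.1, FF Q x) with hG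
  have hGanal : ∀ x, AnalyticAt ℂ G x := fun x => (analyticAt_fst).prod (FF_analyticAt Q x)
  have hGc : ContDiffAt ℂ ω G (w₀, y₀) := (hGanal _).contDiffAt
  have hMcoe : (M : (((Fin n → ℂ) × (Fin l → ℂ)) × ℂ) →L[ℂ] (((Fin n → ℂ) × (Fin l → ℂ)) × ℂ)) = f₁ := rfl
  have hG' : HasFDerivAt G ((M : (((Fin n → ℂ) × (Fin l → ℂ)) × ℂ) ≃L[ℂ] (((Fin n → ℂ) × (Fin l → ℂ)) × ℂ)) : (((Fin n → ℂ) × (Fin l → ℂ)) × ℂ) →L[ℂ] (((Fin n → ℂ) × (Fin l → ℂ)) × ℂ)) (w₀, y₀) := by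
    rw [hMcoe, hf₁]
    exact (hasFDerivAt_fst).prodMk hFd
  set P := hGc.toOpenPartialHomeomorph G hG' (by simp) with hP
  have hPcoe : (P : ((Fin n → ℂ) × (Fin l → ℂ)) × ℂ → ((Fin n → ℂ) × (Fin l → ℂ)) × ℂ) = G := rfl
  have hsrc : (w₀, y₀) ∈ P.source := hGc.mem_toOpenPartialHomeomorph_source hG' (by simp)
  have hb₀ : G (w₀, y₀) = (w₀, (0 : ℂ)) := by simp [hG, h0]
  have htgt : (w₀, (0 : ℂ)) ∈ P.target := by
    rw [← hb₀]; exact hGc.image_mem_toOpenPartialHomeomorph_target hG' (by simp)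
  -- differentiability of the local inverse near (w₀, 0)
  have hinv_cd : ContDiffAt ℂ ω (P.symm) (w₀, (0 : ℂ)) := by
    have := hGc.to_localInverse (hf' := hG') (hn := by simp)
    rw [hb₀] at this
    exact this
  have hev : ∀ᶠ x in 𝓝 (w₀, (0 : ℂ)), DifferentiableAt ℂ P.symm x := by
    have h := hinv_cd.eventually (by simp)
    exact h.mono fun x hx => hx.differentiableAt (by simp)
  obtain ⟨D, hDsub, hDopen, hDmem⟩ := eventually_nhds_iff.1 hev
  refine ⟨{w : (Fin n → ℂ) × (Fin l → ℂ) | (w, (0:ℂ)) ∈ P.target ∩ D}, fun w => (P.symm (w, 0)).2, P.source,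
    ?_, ?_, ?_, ?_, P.open_source, hsrc, ?_⟩
  · exact (P.open_target.inter hDopen).preimage (continuous_id.prodMk continuous_const)
  · exact ⟨htgt, hDmem⟩
  · intro w hw
    have hdiff : DifferentiableAt ℂ P.symm (w, (0:ℂ)) := hDsub _ hw.2
    have : DifferentiableAt ℂ (fun w : (Fin n → ℂ) × (Fin l → ℂ) => (P.symm (w, 0)).2) w := by
      have h1 : DifferentiableAt ℂ (fun w : (Fin n → ℂ) × (Fin l → ℂ) => (w, (0:ℂ))) w :=
        differentiableAt_id.prodMk (differentiableAt_const _)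
      exact (differentiableAt_snd).comp _ (hdiff.comp w h1)
    exact this.differentiableWithinAt
  · intro w hw
    have hri : P (P.symm (w, 0)) = (w, (0:ℂ)) := P.right_inv hw.1
    rw [hPcoe, hG] at hri
    have h1 : (P.symm (w, (0:ℂ))).1 = w := congrArg Prod.fst hri
    have h2 : FF Q (P.symm (w, (0:ℂ))) = 0 := congrArg Prod.snd hri
    have heta : ((w, (P.symm (w, (0:ℂ))).2) : ((Fin n → ℂ) × (Fin l → ℂ)) × ℂ)
        = P.symm (w, (0:ℂ)) := Prod.ext h1.symm rfl
    rw [heta, h2]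
  · intro w y hw hwyS hFF0
    have h2 : P.symm (w, (0:ℂ)) ∈ P.source := P.map_target hw.1
    have h3 : P (P.symm (w, (0:ℂ))) = (w, (0:ℂ)) := P.right_inv hw.1
    have h4 : P (w, y) = (w, (0:ℂ)) := by
      rw [hPcoe, hG]; simp [hFF0]
    have heq : (w, y) = P.symm (w, (0:ℂ)) :=
      P.injOn hwyS h2 (by rw [h3, h4])
    exact congrArg Prod.snd heq

variable {E : Type*} [NormedAddCommGroup E] [NormedSpace ℂ E]

lemma eqOn_zero_ball (f : E → ℂ) (w : E) (R : ℝ)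
    (hf : DifferentiableOn ℂ f (Metric.ball w R))
    (h0 : ∀ᶠ x in 𝓝 w, f x = 0) :
    ∀ y ∈ Metric.ball w R, f y = 0 := by
  intro y hy
  rcases eq_or_ne y w with rfl | hne
  · exact h0.self_of_nhds
  · set d : E := y - w with hd_def
    have hd : d ≠ 0 := sub_ne_zero.2 hne
    have hdn : 0 < ‖d‖ := norm_pos_iff.2 hd
    set ρ : ℝ := R / ‖d‖ with hρ_def
    have hyR : ‖d‖ < R := by
      have := Metric.mem_ball.1 hy
      rwa [dist_eq_norm] at this
    have hρ1 : 1 < ρ := (one_lt_div hdn).2 hyR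
    have hρ0 : 0 < ρ := lt_trans one_pos hρ1
    set line : ℂ → E := fun t => w + t • d with hline
    have hmaps : Set.MapsTo line (Metric.ball (0:ℂ) ρ) (Metric.ball w R) := by
      intro t ht
      have ht' : ‖t‖ < ρ := by
        have := Metric.mem_ball.1 ht
        rwa [dist_zero_right] at this
      have : dist (line t) w < R := by
        rw [hline, dist_eq_norm]
        simp only [add_sub_cancel_left, norm_smul]
        calc ‖t‖ * ‖d‖ < ρ * ‖d‖ := by exact mul_lt_mul_of_pos_right ht' hdn
        _ = R := div_mul_cancel₀ R hdn.ne'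
      exact Metric.mem_ball.2 this
    have hlineDiff : Differentiable ℂ line := by
      rw [hline]
      exact (differentiable_const w).add (differentiable_id.smul_const d)
    have hg : DifferentiableOn ℂ (f ∘ line) (Metric.ball (0:ℂ) ρ) :=
      hf.comp hlineDiff.differentiableOn hmaps
    have hganal : AnalyticOnNhd ℂ (f ∘ line) (Metric.ball (0:ℂ) ρ) :=
      hg.analyticOnNhd Metric.isOpen_ball
    have hline0 : line 0 = w := by simp [hline]
    have hev : (f ∘ line) =ᶠ[𝓝 (0:ℂ)] 0 := by
      have hcont : ContinuousAt line 0 := hlineDiff.continuous.continuousAt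
      have := hcont.tendsto.eventually (by rw [hline0]; exact h0)
      exact this
    have h0mem : (0:ℂ) ∈ Metric.ball (0:ℂ) ρ := by simpa using hρ0
    have := hganal.eqOn_zero_of_preconnected_of_eventuallyEq_zero
      ((convex_ball (0:ℂ) ρ).isPreconnected) h0mem hev
    have h1mem : (1:ℂ) ∈ Metric.ball (0:ℂ) ρ := by
      rw [Metric.mem_ball, dist_zero_right]
      simpa using hρ1
    have := this h1mem
    simpa [hline, hd_def] using this

lemma eqOn_zero_of_connected {U : Set E} (hUopen : IsOpen U) (hUconn : IsConnected U)
    (f : E → ℂ) (hf : DifferentiableOn ℂ f U)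
    (V : Set E) (hVopen : IsOpen V) (hVne : V.Nonempty) (hVU : V ⊆ U)
    (hV0 : ∀ z ∈ V, f z = 0) : ∀ z ∈ U, f z = 0 := by
  set A : Set E := {z | z ∈ U ∧ ∀ᶠ x in 𝓝 z, f x = 0} with hA
  have hAopen : IsOpen A := by
    rw [isOpen_iff_mem_nhds]
    intro z hz
    have h1 : U ∈ 𝓝 z := hUopen.mem_nhds hz.1
    have h2 : {x | ∀ᶠ y in 𝓝 x, f y = 0} ∈ 𝓝 z := hz.2.eventually_nhds
    exact Filter.mem_of_superset (Filter.inter_mem h1 h2) (fun x hx => ⟨hx.1, hx.2⟩)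
  have hVA : V ⊆ A := by
    intro v hv
    exact ⟨hVU hv, Filter.eventually_of_mem (hVopen.mem_nhds hv) hV0⟩
  have hclos : ∀ z ∈ U, z ∈ closure A → z ∈ A := by
    intro z hzU hzc
    obtain ⟨r, hr0, hrU⟩ := Metric.isOpen_iff.1 hUopen z hzU
    obtain ⟨b, hbA, hbz⟩ := Metric.mem_closure_iff.1 hzc (r/2) (by positivity)
    have hball : Metric.ball b (r/2) ⊆ U := by
      intro x hx
      apply hrU
      rw [Metric.mem_ball] at hx ⊢
      calc dist x z ≤ dist x b + dist b z := dist_triangle x b z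
        _ < r/2 + r/2 := add_lt_add hx (by rwa [dist_comm])
        _ = r := by ring
    have hzero := eqOn_zero_ball f b (r/2) (hf.mono hball) hbA.2
    have hzmem : z ∈ Metric.ball b (r/2) := by
      rw [Metric.mem_ball]
      exact hbz
    refine ⟨hzU, Filter.eventually_of_mem (Metric.isOpen_ball.mem_nhds hzmem) hzero⟩
  intro z hzU
  by_cases hzc : z ∈ closure A
  · exact ((hclos z hzU hzc).2).self_of_nhds
  · exfalso
    obtain ⟨v₀, hv₀⟩ := hVne
    have hcover : U ⊆ A ∪ (closure A)ᶜ := by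
      intro x hx
      by_cases hxc : x ∈ closure A
      · exact Or.inl (hclos x hx hxc)
      · exact Or.inr hxc
    have h1 : (U ∩ A).Nonempty := ⟨v₀, hVU hv₀, hVA hv₀⟩
    have h2 : (U ∩ (closure A)ᶜ).Nonempty := ⟨z, hzU, hzc⟩
    obtain ⟨x, _, hxA, hxc⟩ := hUconn.isPreconnected A (closure A)ᶜ hAopen
      isClosed_closure.isOpen_compl hcover h1 h2
    exact hxc (subset_closure hxA)

end Aux

/-- Holomorphic functions which are algebraic over a maximal algebraically independent
subfamily `φ₁,…,φ_l` can be represented, on a smaller open set, as Nash algebraic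
functions of `(z, φ₁(z),…,φ_l(z))`. -/
theorem stmt12 {n s l : ℕ} (hl : l ≤ s)
    (U : Set (Fin n → ℂ)) (hUopen : IsOpen U) (hUconn : IsConnected U)
    (φ : Fin s → (Fin n → ℂ) → ℂ) (hφ : ∀ j, DifferentiableOn ℂ (φ j) U)
    (hindep : ¬ ∃ P : MvPolynomial (Fin n ⊕ Fin l) ℂ, P ≠ 0 ∧
      ∀ z ∈ U, MvPolynomial.eval
        (Sum.elim z (fun i : Fin l => φ (Fin.castLE hl i) z)) P = 0)
    (halg : ∀ j : Fin s, ∃ Q : Polynomial (MvPolynomial (Fin n ⊕ Fin l) ℂ), Q ≠ 0 ∧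
      ∀ z ∈ U, Polynomial.eval₂
        (MvPolynomial.eval (Sum.elim z (fun i : Fin l => φ (Fin.castLE hl i) z)))
        (φ j z) Q = 0) :
    ∃ (U' : Set (Fin n → ℂ)) (Uhat : Set ((Fin n → ℂ) × (Fin l → ℂ)))
      (φhat : Fin s → (Fin n → ℂ) × (Fin l → ℂ) → ℂ),
      U'.Nonempty ∧ IsOpen U' ∧ IsConnected U' ∧ U' ⊆ U ∧
      IsOpen Uhat ∧
      (∀ z ∈ U', (z, fun i : Fin l => φ (Fin.castLE hl i) z) ∈ Uhat) ∧
      (∀ j, NashAlgebraicOn2 (φhat j) Uhat) ∧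
      (∀ j, ∀ z ∈ U',
        φ j z = φhat j (z, fun i : Fin l => φ (Fin.castLE hl i) z)) := by
  classical
  set Φ : (Fin n → ℂ) → (Fin l → ℂ) := fun z => fun i : Fin l => φ (Fin.castLE hl i) z with hΦdef
  have hΦdiff : DifferentiableOn ℂ Φ U := differentiableOn_pi.2 fun i => hφ _
  set emb : Fin s → (Fin n → ℂ) → ((Fin n → ℂ) × (Fin l → ℂ)) × ℂ :=
    fun j z => ((z, Φ z), φ j z) with hembdef
  have hembdiff : ∀ j, DifferentiableOn ℂ (emb j) U :=
    fun j => ((differentiableOn_id).prodMk hΦdiff).prodMk (hφ j)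
  have hembcont : ∀ j, ContinuousOn (emb j) U := fun j => (hembdiff j).continuousOn
  -- choose minimal-degree polynomials
  have hQmin : ∀ j : Fin s, ∃ Q : Polynomial (MvPolynomial (Fin n ⊕ Fin l) ℂ),
      Q ≠ 0 ∧ (∀ z ∈ U, FF Q (emb j z) = 0) ∧
      ¬ (∀ z ∈ U, FF (Polynomial.derivative Q) (emb j z) = 0) := by
    intro j
    obtain ⟨Q₀, hQ₀ne, hQ₀⟩ := halg j
    have hex : ∃ d : ℕ, ∃ Q : Polynomial (MvPolynomial (Fin n ⊕ Fin l) ℂ),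
        (Q ≠ 0 ∧ ∀ z ∈ U, FF Q (emb j z) = 0) ∧ Q.natDegree = d :=
      ⟨Q₀.natDegree, Q₀, ⟨hQ₀ne, fun z hz => hQ₀ z hz⟩, rfl⟩
    obtain ⟨Q, ⟨hQne, hQ0⟩, hQdeg⟩ := Nat.find_spec hex
    refine ⟨Q, hQne, hQ0, fun hall => ?_⟩
    have hd0 : Q.natDegree ≠ 0 := by
      intro h0
      have hC : Q = Polynomial.C (Q.coeff 0) := Polynomial.eq_C_of_natDegree_eq_zero h0
      refine hindep ⟨Q.coeff 0, fun hc => hQne (by rw [hC, hc, map_zero]), fun z hz => ?_⟩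
      have := hQ0 z hz
      rw [hC] at this
      simpa [FF] using this
    have hder_ne : Polynomial.derivative Q ≠ 0 :=
      fun h => hd0 (Polynomial.natDegree_eq_zero_of_derivative_eq_zero h)
    have hlt : (Polynomial.derivative Q).natDegree < Nat.find hex :=
      hQdeg ▸ Polynomial.natDegree_derivative_lt hd0
    exact Nat.find_min hex hlt ⟨Polynomial.derivative Q, ⟨hder_ne, hall⟩, rfl⟩
  choose Q hQne hQ0 hQder using hQmin
  -- the derivative functions are holomorphic on U
  have hcdiff : ∀ j : Fin s, DifferentiableOn ℂ
      (fun z => FF (Polynomial.derivative (Q j)) (emb j z)) U := by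
    intro j
    intro z hz
    exact ((FF_analyticAt (Polynomial.derivative (Q j))
      (emb j z)).differentiableAt.comp_differentiableWithinAt z ((hembdiff j) z hz))
  -- find a common point where all derivatives are nonzero
  have hdense : ∀ t : Finset (Fin s), ∃ V : Set (Fin n → ℂ), IsOpen V ∧ V.Nonempty ∧ V ⊆ U ∧
      ∀ z ∈ V, ∀ j ∈ t, FF (Polynomial.derivative (Q j)) (emb j z) ≠ 0 := by
    intro t
    induction t using Finset.induction_on with
    | empty => exact ⟨U, hUopen, hUconn.nonempty, subset_rfl, by simp⟩
    | @insert j t hj IH =>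
        obtain ⟨V, hVopen, hVne, hVU, hV⟩ := IH
        set V' : Set (Fin n → ℂ) :=
          V ∩ (fun z => FF (Polynomial.derivative (Q j)) (emb j z)) ⁻¹' {(0:ℂ)}ᶜ with hV'def
        have hV'open : IsOpen V' :=
          ContinuousOn.isOpen_inter_preimage
            (((hcdiff j).mono hVU).continuousOn) hVopen (isOpen_compl_singleton)
        have hV'ne : V'.Nonempty := by
          by_contra hemp
          rw [Set.not_nonempty_iff_eq_empty] at hemp
          have hzero : ∀ z ∈ V, FF (Polynomial.derivative (Q j)) (emb j z) = 0 := by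
            intro z hz
            by_contra hne
            have : z ∈ V' := ⟨hz, hne⟩
            rw [hemp] at this
            exact this
          exact hQder j (eqOn_zero_of_connected hUopen hUconn _ (hcdiff j) V hVopen hVne hVU hzero)
        refine ⟨V', hV'open, hV'ne, fun z hz => hVU hz.1, fun z hz j' hj' => ?_⟩
        rcases Finset.mem_insert.1 hj' with rfl | hj't
        · exact hz.2
        · exact hV z hz.1 j' hj't
  obtain ⟨V, hVopen, hVne, hVU, hVprop⟩ := hdense Finset.univ
  obtain ⟨z₀, hz₀V⟩ := hVne
  have hz₀U : z₀ ∈ U := hVU hz₀V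
  have hz₀c : ∀ j : Fin s, FF (Polynomial.derivative (Q j)) (emb j z₀) ≠ 0 :=
    fun j => hVprop z₀ hz₀V j (Finset.mem_univ j)
  -- apply the algebraic implicit function theorem at z₀ for each j
  have key : ∀ j : Fin s, ∃ (Ω : Set ((Fin n → ℂ) × (Fin l → ℂ)))
      (H : (Fin n → ℂ) × (Fin l → ℂ) → ℂ) (S : Set (((Fin n → ℂ) × (Fin l → ℂ)) × ℂ)),
      IsOpen Ω ∧ (z₀, Φ z₀) ∈ Ω ∧ DifferentiableOn ℂ H Ω ∧
      (∀ w ∈ Ω, FF (Q j) (w, H w) = 0) ∧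
      IsOpen S ∧ ((z₀, Φ z₀), φ j z₀) ∈ S ∧
      (∀ w y, w ∈ Ω → (w, y) ∈ S → FF (Q j) (w, y) = 0 → y = H w) := by
    intro j
    exact implicit_key (Q j) (z₀, Φ z₀) (φ j z₀) (hQ0 j z₀ hz₀U) (hz₀c j)
  choose Ω H S hΩopen hΩmem hHdiff hHpoly hSopen hSmem huniq using key
  set Uhat : Set ((Fin n → ℂ) × (Fin l → ℂ)) := ⋂ j : Fin s, Ω j with hUhatdef
  have hUhatopen : IsOpen Uhat := isOpen_iInter_of_finite hΩopen
  -- neighborhood of z₀ ensuring membership conditions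
  set Wb : Set (Fin n → ℂ) := U ∩ ⋂ j : Fin s,
      (U ∩ emb j ⁻¹' (S j ∩ Prod.fst ⁻¹' (Ω j))) with hWbdef
  have hWbopen : IsOpen Wb := by
    apply hUopen.inter
    apply isOpen_iInter_of_finite
    intro j
    exact ContinuousOn.isOpen_inter_preimage (hembcont j) hUopen
      ((hSopen j).inter ((hΩopen j).preimage continuous_fst))
  have hz₀Wb : z₀ ∈ Wb := by
    refine ⟨hz₀U, Set.mem_iInter.2 fun j => ⟨hz₀U, hSmem j, hΩmem j⟩⟩
  obtain ⟨r, hr0, hrball⟩ := Metric.isOpen_iff.1 hWbopen z₀ hz₀Wb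
  refine ⟨Metric.ball z₀ r, Uhat, fun j => H j, ⟨z₀, Metric.mem_ball_self hr0⟩,
    Metric.isOpen_ball, ⟨⟨z₀, Metric.mem_ball_self hr0⟩,
      (convex_ball z₀ r).isPreconnected⟩, ?_, hUhatopen, ?_, ?_, ?_⟩
  · intro z hz
    exact (hrball hz).1
  · intro z hz
    have hzWb := hrball hz
    apply Set.mem_iInter.2
    intro j
    have := (Set.mem_iInter.1 hzWb.2 j).2.2
    exact this
  · intro j
    constructor
    · exact (hHdiff j).mono (Set.iInter_subset _ j)
    · refine ⟨Q j, hQne j, fun zX hzX => ?_⟩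
      exact hHpoly j zX (Set.mem_iInter.1 hzX j)
  · intro j z hz
    have hzWb := hrball hz
    have hj := Set.mem_iInter.1 hzWb.2 j
    have hzU : z ∈ U := hj.1
    have hS : emb j z ∈ S j := hj.2.1
    have hΩ : (z, Φ z) ∈ Ω j := hj.2.2
    exact huniq j (z, Φ z) (φ j z) hΩ hS (hQ0 j z hzU)
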